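/- arXiv:1312.3708 — 2 statements merged into one kernel-verified Lean document; each statement's English description precedes it below -/
import Mathlib

section
/- Let λ be an m-multipartition of n and let s and t be standard λ-tableaux. Suppose there exists i with 1 ≤ i ≤ n−1 such that res_s(k) = res_t(k) in ℚ(q_1,…,q_m) for all k ≠ i, i+1. Then either s = t, or s is obtained from t by interchanging the entries i and i+1 (i.e. s = t composed with the transposition (i, i+1) of values). -/
open scoped BigOperators

/-- A partition, encoded by its sequence of parts: `part k` is the `(k+1)`-st part
`λ_{k+1}`; so the (weakly decreasing, eventually zero) sequence `λ_1, λ_2, …`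
is `part 0, part 1, …`. -/
structure Ptn : Type where
  part : ℕ → ℕ
  antitone : Antitone part
  finite_support : ∃ N, ∀ k, N ≤ k → part k = 0

namespace Ptn

/-- The part `λ_i` for `i ≥ 1` (1-indexed). -/
def row (l : Ptn) (i : ℕ) : ℕ := l.part (i - 1)

/-- The diagram of a partition, as the set of 1-indexed nodes `(i, j)` with
`1 ≤ j ≤ λ_i`. -/
def cells (l : Ptn) : Set (ℕ × ℕ) := {x | 1 ≤ x.1 ∧ 1 ≤ x.2 ∧ x.2 ≤ l.row x.1}

/-- The conjugate partition: `conj l j = λ̂_j = #{i ≥ 1 | λ_i ≥ j}` (for `j ≥ 1`). -/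
noncomputable def conj (l : Ptn) (j : ℕ) : ℕ := Set.ncard {k : ℕ | j ≤ l.part k}

/-- A node of `λ` is removable if deleting it leaves the diagram of a partition. -/
def removable (l : Ptn) : Set (ℕ × ℕ) :=
  {x | x ∈ l.cells ∧ ∃ m : Ptn, m.cells = l.cells \ {x}}

/-- A node not in `λ` is addable if adjoining it gives the diagram of a partition. -/
def addable (l : Ptn) : Set (ℕ × ℕ) :=
  {x | x ∉ l.cells ∧ ∃ m : Ptn, m.cells = l.cells ∪ {x}}

/-- The generalized hook length `h^{λ,μ}_{i,j} = λ_i − i + μ̂_j − j + 1` (an integer). -/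
noncomputable def ghook (l mu : Ptn) (x : ℕ × ℕ) : ℤ :=
  (l.row x.1 : ℤ) - (x.1 : ℤ) + (mu.conj x.2 : ℤ) - (x.2 : ℤ) + 1

/-- The hook length `h^λ_{i,j} = λ_i − i + λ̂_j − j + 1`. -/
noncomputable def hook (l : Ptn) (x : ℕ × ℕ) : ℤ := l.ghook l x

/-- The residue of the node `(a, b)`: `res (a, b) = b − a`. -/
def res (x : ℕ × ℕ) : ℤ := (x.2 : ℤ) - (x.1 : ℤ)

end Ptn

/-- An `m`-multipartition: an `m`-tuple of partitions. -/
def MPtn (m : ℕ) : Type := Fin m → Ptn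

namespace MPtn

variable {m : ℕ}

/-- The diagram: nodes `(i, j, c)` with `(i, j)` in the diagram of the `c`-th component. -/
def cells (l : MPtn m) : Set (ℕ × ℕ × Fin m) := {x | (x.1, x.2.1) ∈ (l x.2.2).cells}

/-- The number of nodes; `l.size = n` says `l` is an `m`-multipartition of `n`. -/
noncomputable def size (l : MPtn m) : ℕ := l.cells.ncard

/-- Removable nodes, defined componentwise. -/
def removable (l : MPtn m) : Set (ℕ × ℕ × Fin m) :=
  {x | (x.1, x.2.1) ∈ (l x.2.2).removable}

/-- Addable nodes, defined componentwise. -/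
def addable (l : MPtn m) : Set (ℕ × ℕ × Fin m) :=
  {x | (x.1, x.2.1) ∈ (l x.2.2).addable}

end MPtn

/-- A `λ`-tableau with entries `1, …, n`, encoded by the map sending `k : Fin n`
(representing the entry `k + 1`) to the node containing that entry; being a tableau
means this is a bijection from the entries onto the diagram of `λ`. -/
def IsTableau {m : ℕ} (l : MPtn m) (n : ℕ) (T : Fin n → ℕ × ℕ × Fin m) : Prop :=
  Function.Injective T ∧ Set.range T = l.cells

/-- A tableau is standard if, within each component, entries increase along rows
and down columns. -/
def IsStandard {m n : ℕ} (T : Fin n → ℕ × ℕ × Fin m) : Prop :=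
  ∀ k l : Fin n, (T k).2.2 = (T l).2.2 →
    (((T k).1 = (T l).1 ∧ (T k).2.1 < (T l).2.1) ∨
      ((T k).2.1 = (T l).2.1 ∧ (T k).1 < (T l).1)) → k < l

/-- The field `F = ℚ(q_1, …, q_m)` of rational functions in indeterminates `q_1, …, q_m`. -/
abbrev FF (m : ℕ) : Type := FractionRing (MvPolynomial (Fin m) ℚ)

/-- The indeterminate `q_c` as an element of `ℚ(q_1, …, q_m)`. -/
noncomputable def qF {m : ℕ} (c : Fin m) : FF m :=
  algebraMap (MvPolynomial (Fin m) ℚ) (FF m) (MvPolynomial.X c)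

/-- The residue `res (a, b, c) = b − a + q_c ∈ ℚ(q_1, …, q_m)` of a node `(a, b, c)`. -/
noncomputable def resF {m : ℕ} (x : ℕ × ℕ × Fin m) : FF m :=
  (x.2.1 : FF m) - (x.1 : FF m) + qF x.2.2

section MainAux
variable {m n : ℕ}

lemma resF_eq_imp {x y : ℕ × ℕ × Fin m} (h : resF x = resF y) :
    x.2.2 = y.2.2 ∧ x.2.1 + y.1 = y.2.1 + x.1 := by
  have hinj : Function.Injective (algebraMap (MvPolynomial (Fin m) ℚ) (FF m)) :=
    IsFractionRing.injective (MvPolynomial (Fin m) ℚ) (FF m)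
  have key : (MvPolynomial.C ((x.2.1 : ℚ) - (x.1 : ℚ)) + MvPolynomial.X x.2.2 :
        MvPolynomial (Fin m) ℚ)
      = (MvPolynomial.C ((y.2.1 : ℚ) - (y.1 : ℚ)) + MvPolynomial.X y.2.2 :
        MvPolynomial (Fin m) ℚ) := by
    apply hinj
    simpa [resF, qF, map_add, map_sub, map_natCast, sub_add_eq_add_sub] using h
  have hcc : x.2.2 = y.2.2 := by
    by_contra hne
    have e1 : ¬(0 : Fin m →₀ ℕ) = Finsupp.single x.2.2 1 := by
      simp [eq_comm, Finsupp.single_eq_zero]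
    have e2 : ¬Finsupp.single y.2.2 1 = Finsupp.single x.2.2 1 := by
      simp [Finsupp.single_eq_single_iff, Ne.symm hne]
    have h2 := congrArg (MvPolynomial.coeff (Finsupp.single x.2.2 1)) key
    simp only [MvPolynomial.coeff_add, MvPolynomial.coeff_C, MvPolynomial.coeff_X,
      MvPolynomial.coeff_X', if_neg e1, if_neg e2] at h2
    norm_num at h2
  refine ⟨hcc, ?_⟩
  rw [hcc, add_left_inj] at key
  have hq : (x.2.1 : ℚ) - x.1 = (y.2.1 : ℚ) - y.1 := MvPolynomial.C_injective _ _ key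
  have hq2 : (x.2.1 : ℚ) + y.1 = (y.2.1 : ℚ) + x.1 := by linear_combination hq
  exact_mod_cast hq2

lemma mem_cells_coord {lam : MPtn m} {x : ℕ × ℕ × Fin m} (hx : x ∈ lam.cells) :
    1 ≤ x.1 ∧ 1 ≤ x.2.1 ∧ x.2.1 ≤ (lam x.2.2).row x.1 := hx

lemma row_antitone (l : Ptn) {i i' : ℕ} (h : i' ≤ i) : l.row i ≤ l.row i' :=
  l.antitone (by omega : i' - 1 ≤ i - 1)

lemma mem_cells_of_tableau {lam : MPtn m} {S : Fin n → ℕ × ℕ × Fin m}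
    (hS : IsTableau lam n S) (k : Fin n) : S k ∈ lam.cells :=
  hS.2 ▸ Set.mem_range_self k

/-- Up-left closedness of a set of nodes. -/
def ULC (U : Set (ℕ × ℕ × Fin m)) : Prop :=
  ∀ i j c, 1 ≤ i → 1 ≤ j →
    (((i + 1, j, c) ∈ U → (i, j, c) ∈ U) ∧ ((i, j + 1, c) ∈ U → (i, j, c) ∈ U))

lemma ULC.vert {U : Set (ℕ × ℕ × Fin m)} (hU : ULC U) {i j : ℕ} {c : Fin m}
    (hi : 1 ≤ i) (hj : 1 ≤ j) : ∀ d : ℕ, (i + d, j, c) ∈ U → (i, j, c) ∈ U := by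
  intro d
  induction d with
  | zero => exact fun h => h
  | succ d ih =>
      intro h
      exact ih ((hU (i + d) j c (by omega) hj).1 (by simpa [Nat.add_assoc] using h))

lemma ULC.horiz {U : Set (ℕ × ℕ × Fin m)} (hU : ULC U) {i j : ℕ} {c : Fin m}
    (hi : 1 ≤ i) (hj : 1 ≤ j) : ∀ d : ℕ, (i, j + d, c) ∈ U → (i, j, c) ∈ U := by
  intro d
  induction d with
  | zero => exact fun h => h
  | succ d ih =>
      intro h
      exact ih ((hU i (j + d) c hi (by omega)).2 (by simpa [Nat.add_assoc] using h))

lemma ULC.rect {U : Set (ℕ × ℕ × Fin m)} (hU : ULC U) {i j i' j' : ℕ} {c : Fin m}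
    (h : (i, j, c) ∈ U) (hi' : 1 ≤ i') (hj' : 1 ≤ j') (hii : i' ≤ i) (hjj : j' ≤ j) :
    (i', j', c) ∈ U := by
  have h1 : (i', j, c) ∈ U := by
    obtain ⟨d, rfl⟩ := Nat.exists_eq_add_of_le hii
    exact hU.vert hi' (by omega) d h
  obtain ⟨d, rfl⟩ := Nat.exists_eq_add_of_le hjj
  exact hU.horiz hi' hj' d h1

/-- Two nodes of an up-left closed set, on the same diagonal of the same component,
both of whose south neighbours are outside the set, coincide. -/
lemma removable_unique {U : Set (ℕ × ℕ × Fin m)} (hU : ULC U)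
    {x y : ℕ × ℕ × Fin m} (hx : x ∈ U) (hy : y ∈ U)
    (hx1 : 1 ≤ x.1) (hx2 : 1 ≤ x.2.1) (hy1 : 1 ≤ y.1) (hy2 : 1 ≤ y.2.1)
    (hc : x.2.2 = y.2.2) (hd : x.2.1 + y.1 = y.2.1 + x.1)
    (hxd : (x.1 + 1, x.2.1, x.2.2) ∉ U) (hyd : (y.1 + 1, y.2.1, y.2.2) ∉ U) :
    x = y := by
  obtain ⟨x1, x2, xc⟩ := x
  obtain ⟨y1, y2, yc⟩ := y
  simp only at *
  subst hc
  rcases lt_trichotomy x1 y1 with h | h | h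
  · exact absurd (hU.rect (show (y1, y2, xc) ∈ U from hy) (by omega) hx2 (by omega)
      (by omega)) hxd
  · obtain rfl : x1 = y1 := h
    obtain rfl : x2 = y2 := by omega
    rfl
  · exact absurd (hU.rect (show (x1, x2, xc) ∈ U from hx) (by omega) hy2 (by omega)
      (by omega)) hyd

/-- Two nodes outside an up-left closed set, on the same diagonal of the same
component, whose north neighbours (when they exist) lie in the set, coincide. -/
lemma addable_unique {U : Set (ℕ × ℕ × Fin m)} (hU : ULC U)
    {x y : ℕ × ℕ × Fin m} (hx : x ∉ U) (hy : y ∉ U)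
    (hx1 : 1 ≤ x.1) (hx2 : 1 ≤ x.2.1) (hy1 : 1 ≤ y.1) (hy2 : 1 ≤ y.2.1)
    (hc : x.2.2 = y.2.2) (hd : x.2.1 + y.1 = y.2.1 + x.1)
    (hxu : 2 ≤ x.1 → (x.1 - 1, x.2.1, x.2.2) ∈ U)
    (hyu : 2 ≤ y.1 → (y.1 - 1, y.2.1, y.2.2) ∈ U) :
    x = y := by
  obtain ⟨x1, x2, xc⟩ := x
  obtain ⟨y1, y2, yc⟩ := y
  simp only at *
  subst hc
  rcases lt_trichotomy x1 y1 with h | h | h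
  · exact absurd (hU.rect (hyu (by omega)) hx1 hx2 (by omega) (by omega)) hx
  · obtain rfl : x1 = y1 := h
    obtain rfl : x2 = y2 := by omega
    rfl
  · exact absurd (hU.rect (hxu (by omega)) hy1 hy2 (by omega) (by omega)) hy

/-- The set of cells occupied by the first `K` entries of a standard tableau is
up-left closed. -/
lemma tableau_ulc {lam : MPtn m} {S : Fin n → ℕ × ℕ × Fin m}
    (hS : IsTableau lam n S) (hSstd : IsStandard S) (K : ℕ) :
    ULC (S '' {j : Fin n | (j : ℕ) < K}) := by
  intro i j c hi hj
  constructor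
  · rintro ⟨p, hp, hpe⟩
    have hcell : ((i + 1 : ℕ), j, c) ∈ lam.cells := hpe ▸ mem_cells_of_tableau hS p
    have hcell' : ((i : ℕ), j, c) ∈ lam.cells := by
      obtain ⟨-, h2, h3⟩ := mem_cells_coord hcell
      have h3' : j ≤ (lam c).row (i + 1) := h3
      exact ⟨hi, h2, h3'.trans (row_antitone _ (by omega))⟩
    obtain ⟨p', hp'⟩ : ∃ p', S p' = ((i : ℕ), j, c) := by
      have : ((i : ℕ), j, c) ∈ Set.range S := hS.2 ▸ hcell'
      exact this
    have hlt : p' < p := by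
      apply hSstd p' p
      · rw [hp', hpe]
      · rw [hp', hpe]
        exact Or.inr ⟨rfl, Nat.lt_succ_self i⟩
    have hltv : (p' : ℕ) < (p : ℕ) := hlt
    have hpv : (p : ℕ) < K := hp
    exact ⟨p', show (p' : ℕ) < K by omega, hp'⟩
  · rintro ⟨p, hp, hpe⟩
    have hcell : ((i : ℕ), j + 1, c) ∈ lam.cells := hpe ▸ mem_cells_of_tableau hS p
    have hcell' : ((i : ℕ), j, c) ∈ lam.cells := by
      obtain ⟨h1, -, h3⟩ := mem_cells_coord hcell
      have h3' : j + 1 ≤ (lam c).row i := h3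
      exact ⟨h1, hj, show j ≤ (lam c).row i by omega⟩
    obtain ⟨p', hp'⟩ : ∃ p', S p' = ((i : ℕ), j, c) := by
      have : ((i : ℕ), j, c) ∈ Set.range S := hS.2 ▸ hcell'
      exact this
    have hlt : p' < p := by
      apply hSstd p' p
      · rw [hp', hpe]
      · rw [hp', hpe]
        exact Or.inl ⟨rfl, Nat.lt_succ_self j⟩
    have hltv : (p' : ℕ) < (p : ℕ) := hlt
    have hpv : (p : ℕ) < K := hp
    exact ⟨p', show (p' : ℕ) < K by omega, hp'⟩

/-- The south neighbour of the cell of entry `k` is not occupied by entries `≤ k`. -/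
lemma south_notMem {lam : MPtn m} {S : Fin n → ℕ × ℕ × Fin m}
    (hS : IsTableau lam n S) (hSstd : IsStandard S) (k : Fin n) :
    ((S k).1 + 1, (S k).2.1, (S k).2.2) ∉ S '' {j : Fin n | (j : ℕ) < (k : ℕ) + 1} := by
  rintro ⟨p, hp, hpe⟩
  have hlt : k < p := by
    apply hSstd k p
    · rw [hpe]
    · rw [hpe]
      exact Or.inr ⟨rfl, Nat.lt_succ_self _⟩
  have hltv : (k : ℕ) < (p : ℕ) := hlt
  have hpv : (p : ℕ) < (k : ℕ) + 1 := hp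
  omega

/-- If the cell of entry `k` is not in the first row, its north neighbour is
occupied by an entry `< k`. -/
lemma north_mem {lam : MPtn m} {S : Fin n → ℕ × ℕ × Fin m}
    (hS : IsTableau lam n S) (hSstd : IsStandard S) (k : Fin n) (h2 : 2 ≤ (S k).1) :
    ((S k).1 - 1, (S k).2.1, (S k).2.2) ∈ S '' {j : Fin n | (j : ℕ) < (k : ℕ)} := by
  obtain ⟨h1, hcol, hrow⟩ := mem_cells_coord (mem_cells_of_tableau hS k)
  have hcell : ((S k).1 - 1, (S k).2.1, (S k).2.2) ∈ lam.cells :=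
    ⟨by omega, hcol, hrow.trans (row_antitone _ (by omega))⟩
  obtain ⟨p, hp⟩ : ∃ p, S p = ((S k).1 - 1, (S k).2.1, (S k).2.2) := by
    have : ((S k).1 - 1, (S k).2.1, (S k).2.2) ∈ Set.range S := hS.2 ▸ hcell
    exact this
  have hlt : p < k := by
    apply hSstd p k
    · rw [hp]
    · rw [hp]
      exact Or.inr ⟨rfl, by show (S k).1 - 1 < (S k).1; omega⟩
  exact ⟨p, hlt, hp⟩

/-- The initial segment as a complement of the final segment. -/
lemma initseg_eq_compl {lam : MPtn m} {S : Fin n → ℕ × ℕ × Fin m}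
    (hS : IsTableau lam n S) (K : ℕ) :
    S '' {j : Fin n | (j : ℕ) < K} = lam.cells \ S '' {j : Fin n | K ≤ (j : ℕ)} := by
  ext x
  constructor
  · rintro ⟨p, hp, rfl⟩
    refine ⟨mem_cells_of_tableau hS p, ?_⟩
    rintro ⟨q, hq, hqe⟩
    have : q = p := hS.1 hqe
    simp only [Set.mem_setOf_eq] at hp hq
    omega
  · rintro ⟨hx, hx2⟩
    obtain ⟨p, rfl⟩ : ∃ p, S p = x := by
      have : x ∈ Set.range S := hS.2 ▸ hx
      exact this
    refine ⟨p, ?_, rfl⟩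
    simp only [Set.mem_setOf_eq]
    by_contra h
    exact hx2 ⟨p, by simp only [Set.mem_setOf_eq]; omega, rfl⟩

end MainAux

theorem statement1 {m n : ℕ} (lam : MPtn m) (hlam : lam.size = n)
    (S T : Fin n → ℕ × ℕ × Fin m)
    (hS : IsTableau lam n S) (hSstd : IsStandard S)
    (hT : IsTableau lam n T) (hTstd : IsStandard T)
    (a b : Fin n) (hab : (b : ℕ) = (a : ℕ) + 1)
    (hres : ∀ k : Fin n, k ≠ a → k ≠ b → resF (S k) = resF (T k)) :
    S = T ∨ S = T ∘ (Equiv.swap a b) := by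
  -- entries strictly before `a` agree
  have claimU : ∀ N : ℕ, ∀ k : Fin n, (k : ℕ) = N → (k : ℕ) < (a : ℕ) → S k = T k := by
    intro N
    induction N using Nat.strong_induction_on with
    | _ N ih =>
      intro k hkN hka
      have hagree : S '' {j : Fin n | (j : ℕ) < (k : ℕ)}
          = T '' {j : Fin n | (j : ℕ) < (k : ℕ)} := by
        apply Set.image_congr
        intro j hj
        have hjv : (j : ℕ) < (k : ℕ) := hj
        exact ih (j : ℕ) (by omega) j rfl (by omega)
      have hU : ULC (S '' {j : Fin n | (j : ℕ) < (k : ℕ)}) := tableau_ulc hS hSstd _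
      have hx : S k ∉ S '' {j : Fin n | (j : ℕ) < (k : ℕ)} := by
        rintro ⟨p, hp, hpe⟩
        have : p = k := hS.1 hpe
        subst this
        exact absurd hp (by simp)
      have hy : T k ∉ S '' {j : Fin n | (j : ℕ) < (k : ℕ)} := by
        rw [hagree]
        rintro ⟨p, hp, hpe⟩
        have : p = k := hT.1 hpe
        subst this
        exact absurd hp (by simp)
      have hka' : k ≠ a := fun h => by rw [h] at hka; omega
      have hkb' : k ≠ b := fun h => by rw [h] at hka; omega
      obtain ⟨hc, hd⟩ := resF_eq_imp (hres k hka' hkb')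
      obtain ⟨hx1, hx2, -⟩ := mem_cells_coord (mem_cells_of_tableau hS k)
      obtain ⟨hy1, hy2, -⟩ := mem_cells_coord (mem_cells_of_tableau hT k)
      refine addable_unique hU hx hy hx1 hx2 hy1 hy2 hc hd
        (north_mem hS hSstd k) ?_
      intro h2
      rw [hagree]
      exact north_mem hT hTstd k h2
  -- entries strictly after `b` agree
  have claimD : ∀ N : ℕ, ∀ k : Fin n, n - (k : ℕ) = N → (b : ℕ) < (k : ℕ) → S k = T k := by
    intro N
    induction N using Nat.strong_induction_on with
    | _ N ih =>
      intro k hkN hkb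
      have hagree : S '' {j : Fin n | (k : ℕ) + 1 ≤ (j : ℕ)}
          = T '' {j : Fin n | (k : ℕ) + 1 ≤ (j : ℕ)} := by
        apply Set.image_congr
        intro j hj
        have hjv : (k : ℕ) + 1 ≤ (j : ℕ) := hj
        have hjn : (j : ℕ) < n := j.isLt
        exact ih (n - (j : ℕ)) (by omega) j rfl (by omega)
      have hUeq : S '' {j : Fin n | (j : ℕ) < (k : ℕ) + 1}
          = T '' {j : Fin n | (j : ℕ) < (k : ℕ) + 1} := by
        rw [initseg_eq_compl hS, initseg_eq_compl hT, hagree]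
      have hU : ULC (S '' {j : Fin n | (j : ℕ) < (k : ℕ) + 1}) := tableau_ulc hS hSstd _
      have hx : S k ∈ S '' {j : Fin n | (j : ℕ) < (k : ℕ) + 1} :=
        ⟨k, by simp, rfl⟩
      have hy : T k ∈ S '' {j : Fin n | (j : ℕ) < (k : ℕ) + 1} := by
        rw [hUeq]
        exact ⟨k, by simp, rfl⟩
      have hka' : k ≠ a := fun h => by rw [h] at hkb; omega
      have hkb' : k ≠ b := fun h => by rw [h] at hkb; omega
      obtain ⟨hc, hd⟩ := resF_eq_imp (hres k hka' hkb')
      obtain ⟨hx1, hx2, -⟩ := mem_cells_coord (mem_cells_of_tableau hS k)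
      obtain ⟨hy1, hy2, -⟩ := mem_cells_coord (mem_cells_of_tableau hT k)
      refine removable_unique hU hx hy hx1 hx2 hy1 hy2 hc hd
        (south_notMem hS hSstd k) ?_
      rw [hUeq]
      exact south_notMem hT hTstd k
  have hST : ∀ k : Fin n, k ≠ a → k ≠ b → S k = T k := by
    intro k hka hkb
    have h1 : (k : ℕ) ≠ (a : ℕ) := fun h => hka (Fin.ext h)
    have h2 : (k : ℕ) ≠ (b : ℕ) := fun h => hkb (Fin.ext h)
    rcases lt_or_ge (k : ℕ) (a : ℕ) with h | h
    · exact claimU (k : ℕ) k rfl h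
    · exact claimD (n - (k : ℕ)) k rfl (by omega)
  have hane : a ≠ b := fun h => by rw [h] at hab; omega
  have hSab : S a ≠ S b := fun h => hane (hS.1 h)
  obtain ⟨p, hp⟩ : ∃ p, T p = S a := by
    have : S a ∈ Set.range T := hT.2 ▸ mem_cells_of_tableau hS a
    exact this
  obtain ⟨q, hq⟩ : ∃ q, T q = S b := by
    have : S b ∈ Set.range T := hT.2 ▸ mem_cells_of_tableau hS b
    exact this
  have hpab : p = a ∨ p = b := by
    by_contra h
    push_neg at h
    have := hST p h.1 h.2
    rw [← this] at hp
    exact h.1 (hS.1 hp)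
  have hqab : q = a ∨ q = b := by
    by_contra h
    push_neg at h
    have := hST q h.1 h.2
    rw [← this] at hq
    exact h.2 (hS.1 hq)
  rcases hpab with hpa | hpb
  · have hSa : S a = T a := by rw [← hp, hpa]
    have hqb : q = b := by
      rcases hqab with hq1 | hq1
      · exfalso
        apply hSab
        rw [hSa, ← hq, hq1]
      · exact hq1
    have hSb : S b = T b := by rw [← hq, hqb]
    left
    funext k
    by_cases hka : k = a
    · rw [hka, hSa]
    · by_cases hkb : k = b
      · rw [hkb, hSb]
      · exact hST k hka hkb
  · have hSa : S a = T b := by rw [← hp, hpb]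
    have hqa : q = a := by
      rcases hqab with hq1 | hq1
      · exact hq1
      · exfalso
        apply hSab
        rw [hSa, ← hq, hq1]
    have hSb : S b = T a := by rw [← hq, hqa]
    right
    funext k
    simp only [Function.comp_apply]
    by_cases hka : k = a
    · rw [hka, Equiv.swap_apply_left, hSa]
    · by_cases hkb : k = b
      · rw [hkb, Equiv.swap_apply_right, hSb]
      · rw [Equiv.swap_apply_of_ne_of_ne hka hkb]
        exact hST k hka hkb
end

section
/- Let λ be a partition, let α be a removable node of λ, and let μ = λ ∖ {α}. Then, as an identity in ℚ: (∏_{(i,j)∈μ} h^μ_{i,j}) / (∏_{(i,j)∈λ} h^λ_{i,j}) = ∏_{β∈R(μ)} (res(β) − res(α)) · ∏_{γ∈A(μ), γ≠α} (res(γ) − res(α))^{-1}, and this common value also equals ∏_{β∈R(μ)} (res(α) − res(β)) · ∏_{γ∈A(μ), γ≠α} (res(α) − res(γ))^{-1}. -/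
open scoped BigOperators

namespace PtnAux
open Ptn Finset

lemma nat_eq_of_le_iff {a b : ℕ} (h : ∀ j, 1 ≤ j → (j ≤ a ↔ j ≤ b)) : a = b := by
  rcases Nat.eq_zero_or_pos a with ha | ha
  · rcases Nat.eq_zero_or_pos b with hb | hb
    · omega
    · have := (h b hb).2 le_rfl; omega
  · rcases Nat.eq_zero_or_pos b with hb | hb
    · have := (h a ha).1 le_rfl; omega
    · have h1 := (h a ha).1 le_rfl
      have h2 := (h b hb).2 le_rfl
      omega

lemma nat_eq_of_lt_iff {a b : ℕ} (h : ∀ k, k < a ↔ k < b) : a = b := by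
  have := h a; have := h b; omega

lemma mem_cells' {p : Ptn} {a b : ℕ} :
    (a, b) ∈ p.cells ↔ 1 ≤ a ∧ 1 ≤ b ∧ b ≤ p.row a := Iff.rfl

lemma row_anti (p : Ptn) {i i' : ℕ} (h1 : 1 ≤ i) (h : i ≤ i') : p.row i' ≤ p.row i :=
  p.antitone (by omega)

lemma conj_iff (p : Ptn) {j : ℕ} (hj : 1 ≤ j) (k : ℕ) : k < p.conj j ↔ j ≤ p.part k := by
  obtain ⟨N, hN⟩ := p.finite_support
  have hne : {k | p.part k < j}.Nonempty := ⟨N, by simp only [Set.mem_setOf_eq, hN N le_rfl]; omega⟩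
  set n := sInf {k | p.part k < j} with hn
  have hmem : p.part n < j := Nat.sInf_mem hne
  have hset : {k : ℕ | j ≤ p.part k} = Set.Iio n := by
    ext m
    simp only [Set.mem_setOf_eq, Set.mem_Iio]
    constructor
    · intro hm
      by_contra hcon
      push_neg at hcon
      have := p.antitone hcon
      omega
    · intro hm
      have : m ∉ {k | p.part k < j} := Nat.notMem_of_lt_sInf hm
      simp only [Set.mem_setOf_eq, not_lt] at this
      exact this
  have hc : p.conj j = n := by
    rw [Ptn.conj, hset, ← Finset.coe_Iio, Set.ncard_coe_finset, Nat.card_Iio]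
  rw [hc]
  have := Set.ext_iff.1 hset k
  simpa using this.symm

lemma conj_anti (p : Ptn) {j j' : ℕ} (hj : 1 ≤ j) (h : j ≤ j') : p.conj j' ≤ p.conj j := by
  by_contra hcon
  push_neg at hcon
  have h1 := (conj_iff p (by omega : 1 ≤ j') (p.conj j)).1 hcon
  have h2 : ¬ (p.conj j < p.conj j) := lt_irrefl _
  rw [conj_iff p hj] at h2
  omega

lemma part_eq_of_cells_eq {p q : Ptn} (h : p.cells = q.cells) (k : ℕ) : p.part k = q.part k := by
  apply nat_eq_of_le_iff
  intro j hj
  have := Set.ext_iff.1 h (k + 1, j)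
  simpa [Ptn.cells, Ptn.row, hj] using this

def modify (p : Ptn) (k0 v : ℕ) (h1 : ∀ k, k < k0 → v ≤ p.part k)
    (h2 : ∀ k, k0 < k → p.part k ≤ v) : Ptn where
  part k := if k = k0 then v else p.part k
  antitone := by
    intro a b hab
    simp only
    by_cases ha : a = k0 <;> by_cases hb : b = k0
    · simp [ha, hb]
    · simp only [ha, if_pos rfl, if_neg hb]
      exact h2 b (by omega)
    · simp only [hb, if_pos rfl, if_neg ha]
      exact h1 a (by omega)
    · simp only [if_neg ha, if_neg hb]
      exact p.antitone hab
  finite_support := by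
    obtain ⟨N, hN⟩ := p.finite_support
    refine ⟨N + k0 + 1, fun k hk => ?_⟩
    simp only [if_neg (by omega : k ≠ k0)]
    exact hN k (by omega)

lemma modify_part (p : Ptn) (k0 v : ℕ) (h1) (h2) (k : ℕ) :
    (modify p k0 v h1 h2).part k = if k = k0 then v else p.part k := rfl

lemma removable_iff (p : Ptn) (x : ℕ × ℕ) :
    x ∈ p.removable ↔ 1 ≤ x.1 ∧ 1 ≤ x.2 ∧ p.row x.1 = x.2 ∧ p.row (x.1 + 1) < x.2 := by
  constructor
  · rintro ⟨⟨hx1, hx2, hx3⟩, m, hm⟩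
    have hrow : p.row x.1 = x.2 := by
      by_contra hcon
      have hlt : x.2 < p.row x.1 := by omega
      have h4 : (x.1, x.2 + 1) ∈ m.cells := by
        rw [hm]
        refine ⟨mem_cells'.2 ⟨hx1, by omega, by omega⟩, ?_⟩
        simp only [Set.mem_singleton_iff, Prod.ext_iff]
        omega
      have h5 : x.2 + 1 ≤ m.row x.1 := (mem_cells'.1 h4).2.2
      have h6 : (x.1, x.2) ∈ m.cells := mem_cells'.2 ⟨hx1, hx2, by omega⟩
      rw [hm] at h6
      exact h6.2 rfl
    refine ⟨hx1, hx2, hrow, ?_⟩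
    have hmx1 : m.row x.1 < x.2 := by
      by_contra hcon
      push_neg at hcon
      have h6 : (x.1, x.2) ∈ m.cells := mem_cells'.2 ⟨hx1, hx2, hcon⟩
      rw [hm] at h6
      exact h6.2 rfl
    have hmanti : m.row (x.1 + 1) ≤ m.row x.1 := row_anti m hx1 (by omega)
    have hmp : m.row (x.1 + 1) = p.row (x.1 + 1) := by
      apply nat_eq_of_le_iff
      intro j hj
      constructor
      · intro hjle
        have h7 : (x.1 + 1, j) ∈ m.cells := mem_cells'.2 ⟨by omega, hj, hjle⟩
        rw [hm] at h7
        exact h7.1.2.2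
      · intro hjle
        have h7 : (x.1 + 1, j) ∈ m.cells := by
          rw [hm]
          refine ⟨mem_cells'.2 ⟨by omega, hj, hjle⟩, ?_⟩
          simp only [Set.mem_singleton_iff, Prod.ext_iff]
          omega
        exact (mem_cells'.1 h7).2.2
    omega
  · rintro ⟨h1, h2, h3, h4⟩
    refine ⟨⟨h1, h2, le_of_eq h3.symm⟩, ?_⟩
    simp only [Ptn.row, Nat.add_sub_cancel] at h3 h4
    have hh1 : ∀ k, k < x.1 - 1 → x.2 - 1 ≤ p.part k := fun k hk => by
      have := p.antitone (show k ≤ x.1 - 1 by omega)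
      omega
    have hh2 : ∀ k, x.1 - 1 < k → p.part k ≤ x.2 - 1 := fun k hk => by
      have := p.antitone (show x.1 ≤ k by omega)
      omega
    refine ⟨modify p (x.1 - 1) (x.2 - 1) hh1 hh2, ?_⟩
    ext y
    simp only [Ptn.cells, Set.mem_setOf_eq, Set.mem_diff, Set.mem_singleton_iff, Ptn.row,
      modify_part, Prod.ext_iff]
    by_cases hy : y.1 - 1 = x.1 - 1
    · rw [if_pos hy, hy]
      omega
    · rw [if_neg hy]
      omega

lemma addable_iff (p : Ptn) (x : ℕ × ℕ) :
    x ∈ p.addable ↔ 1 ≤ x.1 ∧ x.2 = p.row x.1 + 1 ∧ (x.1 = 1 ∨ x.2 ≤ p.row (x.1 - 1)) := by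
  constructor
  · rintro ⟨hx, m, hm⟩
    have hxm : x ∈ m.cells := by rw [hm]; right; rfl
    obtain ⟨hx1, hx2, hx3⟩ := hxm
    have hnrow : p.row x.1 < x.2 := by
      by_contra hcon
      push_neg at hcon
      exact hx ⟨hx1, hx2, hcon⟩
    have heq : x.2 = p.row x.1 + 1 := by
      by_contra hcon
      have hgt : p.row x.1 + 1 < x.2 := by omega
      have h4 : (x.1, x.2 - 1) ∈ m.cells := mem_cells'.2 ⟨hx1, by omega, by omega⟩
      rw [hm] at h4
      rcases h4 with h4 | h4
      · have := h4.2.2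
        simp only at this
        omega
      · simp only [Set.mem_singleton_iff, Prod.ext_iff] at h4
        omega
    refine ⟨hx1, heq, ?_⟩
    by_cases hx1' : x.1 = 1
    · left; exact hx1'
    · right
      have hmanti : m.row x.1 ≤ m.row (x.1 - 1) := row_anti m (by omega) (by omega)
      have hmp : m.row (x.1 - 1) = p.row (x.1 - 1) := by
        apply nat_eq_of_le_iff
        intro j hj
        constructor
        · intro hjle
          have h7 : (x.1 - 1, j) ∈ m.cells := mem_cells'.2 ⟨by omega, hj, hjle⟩
          rw [hm] at h7
          rcases h7 with h7 | h7
          · exact h7.2.2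
          · simp only [Set.mem_singleton_iff, Prod.ext_iff] at h7
            omega
        · intro hjle
          have h7 : (x.1 - 1, j) ∈ m.cells := by
            rw [hm]
            left
            exact mem_cells'.2 ⟨by omega, hj, hjle⟩
          exact (mem_cells'.1 h7).2.2
      omega
  · rintro ⟨h1, h2, h3⟩
    have hnot : x ∉ p.cells := by
      rintro ⟨-, -, hc⟩
      omega
    refine ⟨hnot, ?_⟩
    simp only [Ptn.row] at h2 h3
    have hh1 : ∀ k, k < x.1 - 1 → x.2 ≤ p.part k := fun k hk => by
      have h5 : p.part (x.1 - 1 - 1) ≤ p.part k := p.antitone (by omega)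
      rcases h3 with h3 | h3
      · omega
      · omega
    have hh2 : ∀ k, x.1 - 1 < k → p.part k ≤ x.2 := fun k hk => by
      have := p.antitone (show x.1 - 1 ≤ k by omega)
      omega
    refine ⟨modify p (x.1 - 1) x.2 hh1 hh2, ?_⟩
    ext y
    simp only [Ptn.cells, Set.mem_setOf_eq, Set.mem_union, Set.mem_singleton_iff, Ptn.row,
      modify_part, Prod.ext_iff]
    by_cases hy : y.1 - 1 = x.1 - 1
    · rw [if_pos hy, hy]
      omega
    · rw [if_neg hy]
      omega

lemma one_le_hook (p : Ptn) {x : ℕ × ℕ} (hx : x ∈ p.cells) : 1 ≤ p.hook x := by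
  obtain ⟨h1, h2, h3⟩ := hx
  have h4 : x.1 - 1 < p.conj x.2 := (conj_iff p h2 (x.1 - 1)).2 h3
  simp only [Ptn.hook, Ptn.ghook]
  omega

lemma cells_finite (p : Ptn) : p.cells.Finite := by
  obtain ⟨N, hN⟩ := p.finite_support
  apply Set.Finite.subset (Set.finite_Icc (1, 1) (N, p.part 0))
  rintro ⟨a, b⟩ ⟨h1, h2, h3⟩
  simp only [Ptn.row] at h3
  constructor
  · constructor <;> simp <;> omega
  · have hb : b ≤ p.part 0 := le_trans h3 (p.antitone (Nat.zero_le _))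
    have ha : a ≤ N := by
      by_contra hcon
      have := hN (a - 1) (by omega)
      omega
    exact ⟨ha, hb⟩

lemma addable_finite (p : Ptn) : p.addable.Finite := by
  obtain ⟨N, hN⟩ := p.finite_support
  apply Set.Finite.subset (Set.finite_Icc (1, 1) (N + 1, p.part 0 + 1))
  intro x hx
  rw [addable_iff] at hx
  obtain ⟨h1, h2, h3⟩ := hx
  simp only [Ptn.row] at h2 h3
  have hb : x.2 ≤ p.part 0 + 1 := by
    have := p.antitone (Nat.zero_le (x.1 - 1))
    omega
  have hb1 : 1 ≤ x.2 := by omega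
  have ha : x.1 ≤ N + 1 := by
    by_contra hcon
    have e1 := hN (x.1 - 1) (by omega)
    have e2 := hN (x.1 - 1 - 1) (by omega)
    omega
  have : x = (x.1, x.2) := rfl
  rw [this]
  constructor
  · constructor <;> simp <;> omega
  · exact ⟨ha, hb⟩

lemma cancel_lemma (n : ℕ) (a : ℕ → ℕ) (f g : ℕ → ℚ)
    (hmono : ∀ j, 1 ≤ j → j < n → a (j + 1) ≤ a j)
    (hfg : ∀ j, 1 ≤ j → j < n → a (j + 1) = a j → g (j + 1) = f j) :
    (∏ j ∈ (Finset.Icc 1 n).filter (fun j => j = n ∨ a (j + 1) < a j), f j) *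
        (∏ j ∈ Finset.Icc 1 n, g j) =
      (∏ j ∈ (Finset.Icc 1 n).filter (fun j => j = 1 ∨ a j < a (j - 1)), g j) *
        (∏ j ∈ Finset.Icc 1 n, f j) ∧
    ((Finset.Icc 1 n).filter (fun j => j = n ∨ a (j + 1) < a j)).card =
      ((Finset.Icc 1 n).filter (fun j => j = 1 ∨ a j < a (j - 1))).card := by
  have hC' : (Finset.Icc 1 n).filter (fun j => ¬ (j = 1 ∨ a j < a (j - 1))) =
      ((Finset.Icc 1 n).filter (fun j => ¬ (j = n ∨ a (j + 1) < a j))).image (· + 1) := by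
    ext k
    simp only [mem_filter, mem_image, mem_Icc, not_or, not_lt]
    constructor
    · rintro ⟨⟨hk1, hk2⟩, hk3, hk4⟩
      refine ⟨k - 1, ⟨⟨by omega, by omega⟩, by omega, ?_⟩, by omega⟩
      have h5 := hmono (k - 1) (by omega) (by omega)
      rw [show k - 1 + 1 = k from by omega] at h5 ⊢
      omega
    · rintro ⟨j, ⟨⟨hj1, hj2⟩, hj3, hj4⟩, rfl⟩
      have h5 := hmono j hj1 (by omega)
      refine ⟨⟨by omega, by omega⟩, by omega, ?_⟩
      rw [show j + 1 - 1 = j from by omega]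
      omega
  have hprodC : ∏ j ∈ (Finset.Icc 1 n).filter (fun j => ¬ (j = n ∨ a (j + 1) < a j)), f j =
      ∏ j ∈ (Finset.Icc 1 n).filter (fun j => ¬ (j = 1 ∨ a j < a (j - 1))), g j := by
    rw [hC', Finset.prod_image (fun u hu v hv h => by simpa using h)]
    apply Finset.prod_congr rfl
    intro j hj
    simp only [mem_filter, mem_Icc, not_or, not_lt] at hj
    obtain ⟨⟨hj1, hj2⟩, hj3, hj4⟩ := hj
    have h5 := hmono j hj1 (by omega)
    exact (hfg j hj1 (by omega) (by omega)).symm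
  have hsplitf := Finset.prod_filter_mul_prod_filter_not (Finset.Icc 1 n)
    (fun j => j = n ∨ a (j + 1) < a j) f
  have hsplitg := Finset.prod_filter_mul_prod_filter_not (Finset.Icc 1 n)
    (fun j => j = 1 ∨ a j < a (j - 1)) g
  have hcardE := Finset.card_filter_add_card_filter_not (s := Finset.Icc 1 n)
    (p := fun j => j = n ∨ a (j + 1) < a j)
  have hcardS := Finset.card_filter_add_card_filter_not (s := Finset.Icc 1 n)
    (p := fun j => j = 1 ∨ a j < a (j - 1))
  have hcardC : ((Finset.Icc 1 n).filter (fun j => ¬ (j = n ∨ a (j + 1) < a j))).card =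
      ((Finset.Icc 1 n).filter (fun j => ¬ (j = 1 ∨ a j < a (j - 1)))).card := by
    rw [hC', Finset.card_image_of_injOn (fun u hu v hv h => by simpa using h)]
  constructor
  · rw [← hsplitf, ← hsplitg, hprodC]
    ring
  · omega

end PtnAux

theorem statement3 (lam mu : Ptn) (alpha : ℕ × ℕ)
    (halpha : alpha ∈ lam.removable) (hmu : mu.cells = lam.cells \ {alpha}) :
    (∏ᶠ x ∈ mu.cells, (mu.hook x : ℚ)) / (∏ᶠ x ∈ lam.cells, (lam.hook x : ℚ)) =
        (∏ᶠ b ∈ mu.removable, ((Ptn.res b : ℚ) - (Ptn.res alpha : ℚ))) *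
          (∏ᶠ g ∈ (mu.addable \ {alpha}), ((Ptn.res g : ℚ) - (Ptn.res alpha : ℚ))⁻¹) ∧
      (∏ᶠ x ∈ mu.cells, (mu.hook x : ℚ)) / (∏ᶠ x ∈ lam.cells, (lam.hook x : ℚ)) =
        (∏ᶠ b ∈ mu.removable, ((Ptn.res alpha : ℚ) - (Ptn.res b : ℚ))) *
          (∏ᶠ g ∈ (mu.addable \ {alpha}), ((Ptn.res alpha : ℚ) - (Ptn.res g : ℚ))⁻¹) := by
  classical
  open PtnAux Ptn Finset in
  obtain ⟨r, c⟩ := alpha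
  obtain ⟨halc, -⟩ := halpha
  obtain ⟨hr1, hc1, hrowge⟩ := halc
  simp only at hr1 hc1 hrowge
  have halc : (r, c) ∈ lam.cells := ⟨hr1, hc1, hrowge⟩
  -- membership in mu.cells
  have hmem : ∀ a b : ℕ, (a, b) ∈ mu.cells ↔ ((a, b) ∈ lam.cells ∧ ¬(a = r ∧ b = c)) := by
    intro a b
    rw [hmu]
    simp [Prod.ext_iff]
  -- basic row facts
  have hrowr : lam.row r = c := by
    by_contra hcon
    have hlt : c < lam.row r := by omega
    have h4 : (r, c + 1) ∈ mu.cells := (hmem r (c + 1)).2 ⟨mem_cells'.2 ⟨hr1, by omega, by omega⟩, by omega⟩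
    have h5 : c + 1 ≤ mu.row r := (mem_cells'.1 h4).2.2
    have h6 : (r, c) ∈ mu.cells := mem_cells'.2 ⟨hr1, hc1, by omega⟩
    exact ((hmem r c).1 h6).2 ⟨rfl, rfl⟩
  have hrowmu : mu.row r = c - 1 := by
    apply nat_eq_of_le_iff
    intro j hj
    constructor
    · intro h
      have h6 := (hmem r j).1 (mem_cells'.2 ⟨hr1, hj, h⟩)
      have h7 : j ≤ lam.row r := h6.1.2.2
      have h8 := h6.2
      omega
    · intro h
      refine (mem_cells'.1 ((hmem r j).2 ⟨mem_cells'.2 ⟨hr1, hj, by omega⟩, by omega⟩)).2.2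
  have hrowmu_ne : ∀ i, 1 ≤ i → i ≠ r → mu.row i = lam.row i := by
    intro i hi hir
    apply nat_eq_of_le_iff
    intro j hj
    constructor
    · intro h
      exact ((hmem i j).1 (mem_cells'.2 ⟨hi, hj, h⟩)).1.2.2
    · intro h
      exact (mem_cells'.1 ((hmem i j).2 ⟨mem_cells'.2 ⟨hi, hj, h⟩, by omega⟩)).2.2
  have hple : ∀ i, 1 ≤ i → mu.row i ≤ lam.row i := by
    intro i hi
    by_cases hir : i = r
    · rw [hir, hrowmu, hrowr]; omega
    · rw [hrowmu_ne i hi hir]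
  have hrow_r1 : lam.row (r + 1) ≤ c - 1 := by
    have h1 : mu.row (r + 1) ≤ mu.row r := row_anti mu hr1 (by omega)
    rw [hrowmu_ne (r + 1) (by omega) (by omega)] at h1
    omega
  -- conjugate facts
  have hconjc : lam.conj c = r := by
    apply nat_eq_of_lt_iff
    intro k
    rw [conj_iff lam hc1]
    constructor
    · intro h
      by_contra hcon
      have h2 : lam.part k ≤ lam.part r := lam.antitone (by omega)
      have h3 : lam.row (r + 1) = lam.part r := by simp [Ptn.row]
      omega
    · intro h
      have h2 : lam.part (r - 1) ≤ lam.part k := lam.antitone (by omega)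
      have h3 : lam.part (r - 1) = c := hrowr
      omega
  have hconjmu_ne : ∀ j, 1 ≤ j → j ≠ c → mu.conj j = lam.conj j := by
    intro j hj hjc
    apply nat_eq_of_lt_iff
    intro k
    rw [conj_iff mu hj, conj_iff lam hj]
    by_cases hk : k = r - 1
    · have e1 : mu.part (r - 1) = c - 1 := hrowmu
      have e2 : lam.part (r - 1) = c := hrowr
      rw [hk]
      omega
    · have e : mu.part k = lam.part k := hrowmu_ne (k + 1) (by omega) (by omega)
      rw [e]
  have hconjcmu : mu.conj c = r - 1 := by
    apply nat_eq_of_lt_iff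
    intro k
    rw [conj_iff mu hc1]
    constructor
    · intro h
      by_contra hcon
      have h2 : mu.part k ≤ mu.part (r - 1) := mu.antitone (by omega)
      have e1 : mu.part (r - 1) = c - 1 := hrowmu
      omega
    · intro h
      have e : mu.part k = lam.part k := hrowmu_ne (k + 1) (by omega) (by omega)
      have h2 : lam.part (r - 1) ≤ lam.part k := lam.antitone (by omega)
      have e2 : lam.part (r - 1) = c := hrowr
      omega
  have hconjge : ∀ j, 1 ≤ j → j ≤ c → r ≤ lam.conj j := by
    intro j hj hjc
    calc r = lam.conj c := hconjc.symm
    _ ≤ lam.conj j := conj_anti lam hj hjc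
  -- finiteness
  have hfinmu : mu.cells.Finite := cells_finite mu
  have hfinlam : lam.cells.Finite := cells_finite lam
  have hfinR : mu.removable.Finite := hfinmu.subset (fun x hx => hx.1)
  have hfinA : (mu.addable \ {(r, c)}).Finite := (addable_finite mu).subset Set.diff_subset
  -- the four rational functions
  set fr : ℕ → ℚ := fun j => (c : ℚ) - (r : ℚ) + (lam.conj j : ℚ) - (j : ℚ) with hfr
  set gr : ℕ → ℚ := fun j => (c : ℚ) - (r : ℚ) + (lam.conj j : ℚ) - (j : ℚ) + 1 with hgr
  set fc : ℕ → ℚ := fun i => (lam.row i : ℚ) - (i : ℚ) + (r : ℚ) - (c : ℚ) with hfc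
  set gc : ℕ → ℚ := fun i => (lam.row i : ℚ) - (i : ℚ) + (r : ℚ) - (c : ℚ) + 1 with hgc
  -- cancellation
  obtain ⟨hcanR, hcardR⟩ := cancel_lemma (c - 1) lam.conj fr gr
    (fun j hj _ => conj_anti lam hj (by omega))
    (by
      intro j hj hjn he
      simp only [hfr, hgr]
      rw [he]
      push_cast
      ring)
  obtain ⟨hcanC, hcardC⟩ := cancel_lemma (r - 1) lam.row fc gc
    (fun i hi _ => row_anti lam hi (by omega))
    (by
      intro i hi hin he
      simp only [hfc, hgc]
      rw [he]
      push_cast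
      ring)
  -- cell product decomposition
  have hCmusplit : ∀ F : ℕ × ℕ → ℚ, ∏ x ∈ hfinmu.toFinset, F x =
      ((∏ j ∈ Finset.Icc 1 (c - 1), F (r, j)) * (∏ i ∈ Finset.Icc 1 (r - 1), F (i, c))) *
      ∏ x ∈ (hfinmu.toFinset.filter (fun x => ¬ x.1 = r)).filter (fun x => ¬ x.2 = c), F x := by
    intro F
    have e1 : hfinmu.toFinset.filter (fun x => x.1 = r) =
        (Finset.Icc 1 (c - 1)).image (fun j => (r, j)) := by
      ext ⟨a, b⟩
      simp only [Finset.mem_filter, Set.Finite.mem_toFinset, Finset.mem_image, Finset.mem_Icc,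
        mem_cells', Prod.mk.injEq]
      constructor
      · rintro ⟨⟨ha, hb, hab⟩, rfl⟩
        exact ⟨b, ⟨hb, by omega⟩, rfl, rfl⟩
      · rintro ⟨j, ⟨hj1, hj2⟩, rfl, rfl⟩
        exact ⟨⟨hr1, hj1, by omega⟩, rfl⟩
    have e2 : (hfinmu.toFinset.filter (fun x => ¬ x.1 = r)).filter (fun x => x.2 = c) =
        (Finset.Icc 1 (r - 1)).image (fun i => (i, c)) := by
      ext ⟨a, b⟩
      simp only [Finset.mem_filter, Set.Finite.mem_toFinset, Finset.mem_image, Finset.mem_Icc,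
        mem_cells', Prod.mk.injEq]
      constructor
      · rintro ⟨⟨⟨ha, hb, hab⟩, har⟩, hbc⟩
        subst hbc
        have h5 : a - 1 < mu.conj b := (conj_iff mu hc1 _).2 hab
        rw [hconjcmu] at h5
        exact ⟨a, ⟨ha, by omega⟩, rfl, rfl⟩
      · rintro ⟨i, ⟨hi1, hi2⟩, rfl, rfl⟩
        have h5 : c ≤ lam.row i := by
          have h6 := row_anti lam hi1 (show i ≤ r by omega)
          omega
        have h7 : mu.row i = lam.row i := hrowmu_ne i hi1 (by omega)
        exact ⟨⟨⟨hi1, hc1, by omega⟩, by omega⟩, rfl⟩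
    rw [← Finset.prod_filter_mul_prod_filter_not hfinmu.toFinset (fun x => x.1 = r) F,
      ← Finset.prod_filter_mul_prod_filter_not (hfinmu.toFinset.filter (fun x => ¬ x.1 = r))
        (fun x => x.2 = c) F,
      e1, e2, Finset.prod_image (fun u _ v _ h => by simpa using h),
      Finset.prod_image (fun u _ v _ h => by simpa using h)]
    ring
  have hdef : ∀ (p : Ptn) (a b : ℕ), p.hook (a, b) =
      (p.row a : ℤ) - (a : ℤ) + (p.conj b : ℤ) - (b : ℤ) + 1 := fun p a b => rfl
  have hmuhook_row : ∀ j ∈ Finset.Icc 1 (c - 1), ((mu.hook (r, j) : ℤ) : ℚ) = fr j := by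
    intro j hj
    simp only [Finset.mem_Icc] at hj
    rw [hdef, hrowmu, hconjmu_ne j (by omega) (by omega), hfr]
    push_cast [Nat.cast_sub hc1]
    ring
  have hlamhook_row : ∀ j ∈ Finset.Icc 1 (c - 1), ((lam.hook (r, j) : ℤ) : ℚ) = gr j := by
    intro j hj
    simp only [Finset.mem_Icc] at hj
    rw [hdef, hrowr, hgr]
    push_cast
    ring
  have hmuhook_col : ∀ i ∈ Finset.Icc 1 (r - 1), ((mu.hook (i, c) : ℤ) : ℚ) = fc i := by
    intro i hi
    simp only [Finset.mem_Icc] at hi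
    rw [hdef, hconjcmu, hrowmu_ne i (by omega) (by omega), hfc]
    push_cast [Nat.cast_sub hr1]
    ring
  have hlamhook_col : ∀ i ∈ Finset.Icc 1 (r - 1), ((lam.hook (i, c) : ℤ) : ℚ) = gc i := by
    intro i hi
    simp only [Finset.mem_Icc] at hi
    rw [hdef, hconjc, hgc]
    push_cast
    ring
  have hhook_D : ∀ x ∈ (hfinmu.toFinset.filter (fun x => ¬ x.1 = r)).filter
      (fun x => ¬ x.2 = c), ((mu.hook x : ℤ) : ℚ) = ((lam.hook x : ℤ) : ℚ) := by
    intro x hx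
    simp only [Finset.mem_filter, Set.Finite.mem_toFinset] at hx
    obtain ⟨⟨hx1, hx2⟩, hx3⟩ := hx
    obtain ⟨ha, hb, hab⟩ := hx1
    have h1 : mu.row x.1 = lam.row x.1 := hrowmu_ne x.1 ha hx2
    have h2 : mu.conj x.2 = lam.conj x.2 := hconjmu_ne x.2 hb hx3
    simp only [Ptn.hook, Ptn.ghook, h1, h2]
  have hprodmu : ∏ x ∈ hfinmu.toFinset, ((mu.hook x : ℤ) : ℚ) =
      ((∏ j ∈ Finset.Icc 1 (c - 1), fr j) * (∏ i ∈ Finset.Icc 1 (r - 1), fc i)) *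
      ∏ x ∈ (hfinmu.toFinset.filter (fun x => ¬ x.1 = r)).filter (fun x => ¬ x.2 = c),
        ((lam.hook x : ℤ) : ℚ) := by
    rw [hCmusplit (fun x => ((mu.hook x : ℤ) : ℚ))]
    rw [Finset.prod_congr rfl hmuhook_row, Finset.prod_congr rfl hmuhook_col,
      Finset.prod_congr rfl hhook_D]
  have hCl : hfinlam.toFinset = insert (r, c) hfinmu.toFinset := by
    ext x
    simp only [Set.Finite.mem_toFinset, Finset.mem_insert]
    constructor
    · intro hx
      by_cases hxa : x = (r, c)
      · exact Or.inl hxa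
      · right; rw [hmu]; exact ⟨hx, hxa⟩
    · rintro (rfl | hx)
      · exact halc
      · rw [hmu] at hx; exact hx.1
  have hnotmem : (r, c) ∉ hfinmu.toFinset := by
    simp only [Set.Finite.mem_toFinset]
    intro hx
    exact ((hmem r c).1 hx).2 ⟨rfl, rfl⟩
  have hlamhook_alpha : ((lam.hook (r, c) : ℤ) : ℚ) = 1 := by
    rw [hdef, hrowr, hconjc]
    push_cast
    ring
  have hprodlam : ∏ x ∈ hfinlam.toFinset, ((lam.hook x : ℤ) : ℚ) =
      ((∏ j ∈ Finset.Icc 1 (c - 1), gr j) * (∏ i ∈ Finset.Icc 1 (r - 1), gc i)) *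
      ∏ x ∈ (hfinmu.toFinset.filter (fun x => ¬ x.1 = r)).filter (fun x => ¬ x.2 = c),
        ((lam.hook x : ℤ) : ℚ) := by
    rw [hCl, Finset.prod_insert hnotmem, hCmusplit (fun x => ((lam.hook x : ℤ) : ℚ))]
    rw [Finset.prod_congr rfl hlamhook_row, Finset.prod_congr rfl hlamhook_col,
      hlamhook_alpha, one_mul]
  -- identification of removable and addable nodes
  have hR : hfinR.toFinset =
      (((Finset.Icc 1 (c - 1)).filter (fun j => j = c - 1 ∨ lam.conj (j + 1) < lam.conj j)).image
        (fun j => (lam.conj j, j))) ∪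
      (((Finset.Icc 1 (r - 1)).filter (fun i => i = r - 1 ∨ lam.row (i + 1) < lam.row i)).image
        (fun i => (i, lam.row i))) := by
    ext ⟨i0, j0⟩
    rw [Set.Finite.mem_toFinset, removable_iff]
    simp only [Finset.mem_union, Finset.mem_image, Finset.mem_filter, Finset.mem_Icc,
      Prod.mk.injEq]
    constructor
    · rintro ⟨hi0, hj0, hrow, hrow1⟩
      by_cases hcase : i0 < r
      · right
        have e2 : mu.row i0 = lam.row i0 := hrowmu_ne i0 hi0 (by omega)
        refine ⟨i0, ⟨⟨hi0, by omega⟩, ?_⟩, rfl, by omega⟩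
        by_cases h2 : i0 = r - 1
        · left; exact h2
        · right
          have e1 : mu.row (i0 + 1) = lam.row (i0 + 1) := hrowmu_ne (i0 + 1) (by omega) (by omega)
          omega
      · left
        have hler : r ≤ i0 := by omega
        have hjc : j0 ≤ c - 1 := by
          have h2 : mu.row i0 ≤ mu.row r := row_anti mu hr1 hler
          omega
        have h3 : lam.row (i0 + 1) < j0 := by
          rw [← hrowmu_ne (i0 + 1) (by omega) (by omega)]; exact hrow1
        have hconj_eq : lam.conj j0 = i0 := by
          have hge : i0 ≤ lam.conj j0 := by
            have hp : mu.row i0 ≤ lam.row i0 := hple i0 hi0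
            have h4 : i0 - 1 < lam.conj j0 := (conj_iff lam hj0 _).2 (by
              have : lam.row i0 = lam.part (i0 - 1) := rfl
              omega)
            omega
          have hle : lam.conj j0 ≤ i0 := by
            by_contra hcon
            have h4 := (conj_iff lam hj0 i0).1 (by omega)
            have h5 : lam.row (i0 + 1) = lam.part i0 := rfl
            omega
          omega
        refine ⟨j0, ⟨⟨hj0, hjc⟩, ?_⟩, hconj_eq, rfl⟩
        by_cases h2 : j0 = c - 1
        · left; exact h2
        · right
          have h3 : mu.conj (j0 + 1) ≤ i0 - 1 := by
            by_contra hcon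
            have h4 := (conj_iff mu (by omega : 1 ≤ j0 + 1) (i0 - 1)).1 (by omega)
            have h5 : mu.part (i0 - 1) = j0 := hrow
            omega
          rw [← hconjmu_ne (j0 + 1) (by omega) (by omega)]
          omega
    · rintro (⟨j, ⟨⟨hj1, hj2⟩, hcond⟩, hconjj, hjj⟩ | ⟨i, ⟨⟨hi1, hi2⟩, hcond⟩, hii, hrowi⟩)
      · subst hjj
        subst hconjj
        have hge_r : r ≤ lam.conj j := hconjge j hj1 (by omega)
        have h3 : lam.part (lam.conj j) < j := by
          have := conj_iff lam hj1 (lam.conj j)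
          omega
        have h4 : mu.row (lam.conj j + 1) = lam.part (lam.conj j) :=
          hrowmu_ne (lam.conj j + 1) (by omega) (by omega)
        have h5 : mu.row (lam.conj j) = j := by
          by_cases hcr : lam.conj j = r
          · have hjc : j = c - 1 := by
              rcases hcond with h | h
              · exact h
              · exfalso
                have h6 : r ≤ lam.conj (j + 1) := hconjge (j + 1) (by omega) (by omega)
                omega
            rw [hcr, hrowmu, hjc]
          · have h6 : mu.row (lam.conj j) = lam.row (lam.conj j) :=
              hrowmu_ne _ (by omega) hcr
            have h7 : j ≤ lam.part (lam.conj j - 1) := (conj_iff lam hj1 _).1 (by omega)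
            have h8 : lam.conj (j + 1) ≤ lam.conj j - 1 := by
              rcases hcond with h | h
              · have h9 : lam.conj (j + 1) ≤ lam.conj c := by
                  rw [show j + 1 = c from by omega]
                omega
              · omega
            have h9 := conj_iff lam (by omega : 1 ≤ j + 1) (lam.conj j - 1)
            have h10 : lam.row (lam.conj j) = lam.part (lam.conj j - 1) := rfl
            omega
        exact ⟨by omega, hj1, h5, by omega⟩
      · subst hii
        subst hrowi
        have h2 : c ≤ lam.row i := by
          have := row_anti lam hi1 (show i ≤ r by omega)
          omega
        have h3 : mu.row i = lam.row i := hrowmu_ne i hi1 (by omega)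
        have h4 : mu.row (i + 1) < lam.row i := by
          by_cases hir : i + 1 = r
          · rw [hir, hrowmu]; omega
          · rw [hrowmu_ne (i + 1) (by omega) hir]
            rcases hcond with h | h
            · omega
            · exact h
        exact ⟨hi1, by omega, h3, h4⟩
  have hA : hfinA.toFinset =
      (((Finset.Icc 1 (c - 1)).filter (fun j => j = 1 ∨ lam.conj j < lam.conj (j - 1))).image
        (fun j => (lam.conj j + 1, j))) ∪
      (((Finset.Icc 1 (r - 1)).filter (fun i => i = 1 ∨ lam.row i < lam.row (i - 1))).image
        (fun i => (i, lam.row i + 1))) := by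
    ext ⟨i0, j0⟩
    rw [Set.Finite.mem_toFinset, Set.mem_diff]
    rw [addable_iff]
    simp only [Set.mem_singleton_iff, Finset.mem_union, Finset.mem_image, Finset.mem_filter,
      Finset.mem_Icc, Prod.mk.injEq]
    constructor
    · rintro ⟨⟨hi0, hj0eq, hdisj⟩, hne⟩
      rcases lt_trichotomy i0 r with hcase | hcase | hcase
      · right
        have e2 : mu.row i0 = lam.row i0 := hrowmu_ne i0 hi0 (by omega)
        refine ⟨i0, ⟨⟨hi0, by omega⟩, ?_⟩, rfl, by omega⟩
        by_cases h2 : i0 = 1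
        · left; exact h2
        · right
          have e1 : mu.row (i0 - 1) = lam.row (i0 - 1) := hrowmu_ne (i0 - 1) (by omega) (by omega)
          omega
      · exfalso
        subst hcase
        have hj0c : j0 = c := by rw [hj0eq, hrowmu]; omega
        exact hne ⟨rfl, hj0c⟩
      · left
        have h2 : lam.row i0 ≤ c - 1 :=
          le_trans (row_anti lam (by omega) (show r + 1 ≤ i0 by omega)) hrow_r1
        have e2 : mu.row i0 = lam.row i0 := hrowmu_ne i0 hi0 (by omega)
        have hj0c : j0 ≤ c - 1 := by
          by_cases h3 : j0 = c
          · exfalso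
            rcases hdisj with h4 | h4
            · omega
            · by_cases h5 : i0 - 1 = r
              · rw [h5, hrowmu] at h4; omega
              · rw [hrowmu_ne (i0 - 1) (by omega) h5] at h4
                have h6 : lam.row (i0 - 1) ≤ c - 1 :=
                  le_trans (row_anti lam (by omega) (show r + 1 ≤ i0 - 1 by omega)) hrow_r1
                omega
          · omega
        have hj01 : 1 ≤ j0 := by omega
        have hconj_eq : lam.conj j0 + 1 = i0 := by
          have hge : i0 - 1 ≤ lam.conj j0 := by
            rcases hdisj with h4 | h4
            · omega
            · have h5 : j0 ≤ lam.row (i0 - 1) := by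
                by_cases h6 : i0 - 1 = r
                · rw [h6, hrowr]; omega
                · rw [← hrowmu_ne (i0 - 1) (by omega) h6]; exact h4
              have h7 := (conj_iff lam hj01 (i0 - 1 - 1)).2 h5
              omega
          have hle : lam.conj j0 ≤ i0 - 1 := by
            have h5 : lam.part (i0 - 1) < j0 := by
              have h6 : lam.row i0 = lam.part (i0 - 1) := rfl
              omega
            have h6 := conj_iff lam hj01 (i0 - 1)
            omega
          omega
        refine ⟨j0, ⟨⟨hj01, hj0c⟩, ?_⟩, hconj_eq, rfl⟩
        by_cases h3 : j0 = 1
        · left; exact h3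
        · right
          have h4 : j0 - 1 ≤ lam.part (i0 - 1) := by
            have h6 : lam.row i0 = lam.part (i0 - 1) := rfl
            omega
          have h5 := (conj_iff lam (by omega : 1 ≤ j0 - 1) (i0 - 1)).2 h4
          omega
    · rintro (⟨j, ⟨⟨hj1, hj2⟩, hcond⟩, hconjj, hjj⟩ | ⟨i, ⟨⟨hi1, hi2⟩, hcond⟩, hii, hrowi⟩)
      · subst hjj
        subst hconjj
        have hgec : r ≤ lam.conj j := hconjge j hj1 (by omega)
        have h3 : lam.part (lam.conj j) < j := by
          have := conj_iff lam hj1 (lam.conj j)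
          omega
        have h4 : mu.row (lam.conj j + 1) = lam.part (lam.conj j) :=
          hrowmu_ne (lam.conj j + 1) (by omega) (by omega)
        have h5 : j - 1 ≤ lam.part (lam.conj j) := by
          by_cases hj1' : j = 1
          · omega
          · rcases hcond with h | h
            · omega
            · have := (conj_iff lam (by omega : 1 ≤ j - 1) (lam.conj j)).1 (by omega)
              omega
        have h6 : j ≤ mu.row (lam.conj j + 1 - 1) := by
          rw [show lam.conj j + 1 - 1 = lam.conj j from rfl]
          by_cases h7 : lam.conj j = r
          · rw [h7, hrowmu]; omega
          · rw [hrowmu_ne _ (by omega) h7]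
            have h8 : j ≤ lam.part (lam.conj j - 1) := (conj_iff lam hj1 _).1 (by omega)
            have h9 : lam.row (lam.conj j) = lam.part (lam.conj j - 1) := rfl
            omega
        exact ⟨⟨by omega, by omega, Or.inr h6⟩, by omega⟩
      · subst hii
        subst hrowi
        have e2 : mu.row i = lam.row i := hrowmu_ne i hi1 (by omega)
        have hd : i = 1 ∨ lam.row i + 1 ≤ mu.row (i - 1) := by
          by_cases h1 : i = 1
          · left; exact h1
          · right
            rcases hcond with h | h
            · exact absurd h h1
            · rw [hrowmu_ne (i - 1) (by omega) (by omega)]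
              omega
        have h2 : c ≤ lam.row i := by
          have := row_anti lam hi1 (show i ≤ r by omega)
          omega
        exact ⟨⟨hi1, by omega, hd⟩, by omega⟩
  -- residue computations
  have hres_row1 : ∀ j : ℕ, ((Ptn.res (lam.conj j, j) : ℤ) : ℚ) - ((Ptn.res (r, c) : ℤ) : ℚ) =
      -fr j := by
    intro j
    simp only [Ptn.res, hfr]
    push_cast
    ring
  have hres_row2 : ∀ j : ℕ, ((Ptn.res (r, c) : ℤ) : ℚ) - ((Ptn.res (lam.conj j, j) : ℤ) : ℚ) =
      fr j := by
    intro j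
    simp only [Ptn.res, hfr]
    push_cast
    ring
  have hres_col1 : ∀ i : ℕ, ((Ptn.res (i, lam.row i) : ℤ) : ℚ) - ((Ptn.res (r, c) : ℤ) : ℚ) =
      fc i := by
    intro i
    simp only [Ptn.res, hfc]
    push_cast
    ring
  have hres_col2 : ∀ i : ℕ, ((Ptn.res (r, c) : ℤ) : ℚ) - ((Ptn.res (i, lam.row i) : ℤ) : ℚ) =
      -fc i := by
    intro i
    simp only [Ptn.res, hfc]
    push_cast
    ring
  have hres_arow1 : ∀ j : ℕ, ((Ptn.res (lam.conj j + 1, j) : ℤ) : ℚ) -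
      ((Ptn.res (r, c) : ℤ) : ℚ) = -gr j := by
    intro j
    simp only [Ptn.res, hgr]
    push_cast
    ring
  have hres_arow2 : ∀ j : ℕ, ((Ptn.res (r, c) : ℤ) : ℚ) -
      ((Ptn.res (lam.conj j + 1, j) : ℤ) : ℚ) = gr j := by
    intro j
    simp only [Ptn.res, hgr]
    push_cast
    ring
  have hres_acol1 : ∀ i : ℕ, ((Ptn.res (i, lam.row i + 1) : ℤ) : ℚ) -
      ((Ptn.res (r, c) : ℤ) : ℚ) = gc i := by
    intro i
    simp only [Ptn.res, hgc]
    push_cast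
    ring
  have hres_acol2 : ∀ i : ℕ, ((Ptn.res (r, c) : ℤ) : ℚ) -
      ((Ptn.res (i, lam.row i + 1) : ℤ) : ℚ) = -gc i := by
    intro i
    simp only [Ptn.res, hgc]
    push_cast
    ring
  -- sign lemma
  have hsign : ∀ (s : Finset ℕ) (f : ℕ → ℚ), (∏ j ∈ s, -f j) = (-1) ^ s.card * ∏ j ∈ s, f j := by
    intro s f
    rw [← Finset.prod_const, ← Finset.prod_mul_distrib]
    exact Finset.prod_congr rfl (fun j _ => by ring)
  -- disjointness
  have hdisjR : Disjoint
      (((Finset.Icc 1 (c - 1)).filter (fun j => j = c - 1 ∨ lam.conj (j + 1) < lam.conj j)).image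
        (fun j => (lam.conj j, j)))
      (((Finset.Icc 1 (r - 1)).filter (fun i => i = r - 1 ∨ lam.row (i + 1) < lam.row i)).image
        (fun i => (i, lam.row i))) := by
    rw [Finset.disjoint_left]
    rintro ⟨a, b⟩ h1 h2
    simp only [Finset.mem_image, Finset.mem_filter, Finset.mem_Icc, Prod.mk.injEq] at h1 h2
    obtain ⟨j, ⟨⟨hj1, hj2⟩, -⟩, -, hjb⟩ := h1
    obtain ⟨i, ⟨⟨hi1, hi2⟩, -⟩, -, hib⟩ := h2
    have h3 : c ≤ lam.row i := by
      have := row_anti lam hi1 (show i ≤ r by omega)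
      omega
    omega
  have hdisjA : Disjoint
      (((Finset.Icc 1 (c - 1)).filter (fun j => j = 1 ∨ lam.conj j < lam.conj (j - 1))).image
        (fun j => (lam.conj j + 1, j)))
      (((Finset.Icc 1 (r - 1)).filter (fun i => i = 1 ∨ lam.row i < lam.row (i - 1))).image
        (fun i => (i, lam.row i + 1))) := by
    rw [Finset.disjoint_left]
    rintro ⟨a, b⟩ h1 h2
    simp only [Finset.mem_image, Finset.mem_filter, Finset.mem_Icc, Prod.mk.injEq] at h1 h2
    obtain ⟨j, ⟨⟨hj1, hj2⟩, -⟩, -, hjb⟩ := h1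
    obtain ⟨i, ⟨⟨hi1, hi2⟩, -⟩, -, hib⟩ := h2
    have h3 : c ≤ lam.row i := by
      have := row_anti lam hi1 (show i ≤ r by omega)
      omega
    omega
  -- product over removable nodes
  have hRprod1 : (∏ b ∈ hfinR.toFinset, (((Ptn.res b : ℤ) : ℚ) - ((Ptn.res (r, c) : ℤ) : ℚ))) =
      (-1) ^ (((Finset.Icc 1 (c - 1)).filter
          (fun j => j = c - 1 ∨ lam.conj (j + 1) < lam.conj j)).card) *
      (∏ j ∈ (Finset.Icc 1 (c - 1)).filter
          (fun j => j = c - 1 ∨ lam.conj (j + 1) < lam.conj j), fr j) *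
      (∏ i ∈ (Finset.Icc 1 (r - 1)).filter
          (fun i => i = r - 1 ∨ lam.row (i + 1) < lam.row i), fc i) := by
    rw [hR, Finset.prod_union hdisjR,
      Finset.prod_image (fun u _ v _ h => by have := congrArg Prod.snd h; simpa using this),
      Finset.prod_image (fun u _ v _ h => by have := congrArg Prod.fst h; simpa using this)]
    simp only [hres_row1, hres_col1]
    rw [hsign]
    all_goals ring
  have hRprod2 : (∏ b ∈ hfinR.toFinset, (((Ptn.res (r, c) : ℤ) : ℚ) - ((Ptn.res b : ℤ) : ℚ))) =
      (-1) ^ (((Finset.Icc 1 (r - 1)).filter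
          (fun i => i = r - 1 ∨ lam.row (i + 1) < lam.row i)).card) *
      (∏ j ∈ (Finset.Icc 1 (c - 1)).filter
          (fun j => j = c - 1 ∨ lam.conj (j + 1) < lam.conj j), fr j) *
      (∏ i ∈ (Finset.Icc 1 (r - 1)).filter
          (fun i => i = r - 1 ∨ lam.row (i + 1) < lam.row i), fc i) := by
    rw [hR, Finset.prod_union hdisjR,
      Finset.prod_image (fun u _ v _ h => by have := congrArg Prod.snd h; simpa using this),
      Finset.prod_image (fun u _ v _ h => by have := congrArg Prod.fst h; simpa using this)]
    simp only [hres_row2, hres_col2]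
    rw [hsign]
    all_goals ring
  -- product over addable nodes
  have hAprod1 : (∏ g ∈ hfinA.toFinset,
      ((((Ptn.res g : ℤ) : ℚ) - ((Ptn.res (r, c) : ℤ) : ℚ))⁻¹)) =
      ((-1) ^ (((Finset.Icc 1 (c - 1)).filter
          (fun j => j = 1 ∨ lam.conj j < lam.conj (j - 1))).card) *
      (∏ j ∈ (Finset.Icc 1 (c - 1)).filter
          (fun j => j = 1 ∨ lam.conj j < lam.conj (j - 1)), gr j) *
      (∏ i ∈ (Finset.Icc 1 (r - 1)).filter
          (fun i => i = 1 ∨ lam.row i < lam.row (i - 1)), gc i))⁻¹ := by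
    rw [Finset.prod_inv_distrib]
    congr 1
    rw [hA, Finset.prod_union hdisjA,
      Finset.prod_image (fun u _ v _ h => by have := congrArg Prod.snd h; simpa using this),
      Finset.prod_image (fun u _ v _ h => by have := congrArg Prod.fst h; simpa using this)]
    simp only [hres_arow1, hres_acol1]
    rw [hsign]
    all_goals ring
  have hAprod2 : (∏ g ∈ hfinA.toFinset,
      ((((Ptn.res (r, c) : ℤ) : ℚ) - ((Ptn.res g : ℤ) : ℚ))⁻¹)) =
      ((-1) ^ (((Finset.Icc 1 (r - 1)).filter
          (fun i => i = 1 ∨ lam.row i < lam.row (i - 1))).card) *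
      (∏ j ∈ (Finset.Icc 1 (c - 1)).filter
          (fun j => j = 1 ∨ lam.conj j < lam.conj (j - 1)), gr j) *
      (∏ i ∈ (Finset.Icc 1 (r - 1)).filter
          (fun i => i = 1 ∨ lam.row i < lam.row (i - 1)), gc i))⁻¹ := by
    rw [Finset.prod_inv_distrib]
    congr 1
    rw [hA, Finset.prod_union hdisjA,
      Finset.prod_image (fun u _ v _ h => by have := congrArg Prod.snd h; simpa using this),
      Finset.prod_image (fun u _ v _ h => by have := congrArg Prod.fst h; simpa using this)]
    simp only [hres_arow2, hres_acol2]
    rw [hsign]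
    all_goals ring
  -- nonvanishing
  have hsubcells : mu.cells ⊆ lam.cells := by
    rw [hmu]; exact Set.diff_subset
  have hlamne : ∀ x ∈ lam.cells, ((lam.hook x : ℤ) : ℚ) ≠ 0 := by
    intro x hx
    have h1 := one_le_hook lam hx
    intro h
    rw [Int.cast_eq_zero] at h
    omega
  have hPDne : (∏ x ∈ (hfinmu.toFinset.filter (fun x => ¬ x.1 = r)).filter
      (fun x => ¬ x.2 = c), ((lam.hook x : ℤ) : ℚ)) ≠ 0 := by
    apply Finset.prod_ne_zero_iff.2
    intro x hx
    simp only [Finset.mem_filter, Set.Finite.mem_toFinset] at hx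
    exact hlamne x (hsubcells hx.1.1)
  have hgrne : ∀ j ∈ Finset.Icc 1 (c - 1), gr j ≠ 0 := by
    intro j hj
    rw [← hlamhook_row j hj]
    simp only [Finset.mem_Icc] at hj
    exact hlamne (r, j) (mem_cells'.2 ⟨hr1, by omega, by rw [hrowr]; omega⟩)
  have hgcne : ∀ i ∈ Finset.Icc 1 (r - 1), gc i ≠ 0 := by
    intro i hi
    rw [← hlamhook_col i hi]
    simp only [Finset.mem_Icc] at hi
    refine hlamne (i, c) (mem_cells'.2 ⟨by omega, hc1, ?_⟩)
    have := row_anti lam (by omega : 1 ≤ i) (show i ≤ r by omega)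
    omega
  have hB1ne : (∏ j ∈ Finset.Icc 1 (c - 1), gr j) ≠ 0 := Finset.prod_ne_zero_iff.2 hgrne
  have hB2ne : (∏ i ∈ Finset.Icc 1 (r - 1), gc i) ≠ 0 := Finset.prod_ne_zero_iff.2 hgcne
  have hPS1ne : (∏ j ∈ (Finset.Icc 1 (c - 1)).filter
      (fun j => j = 1 ∨ lam.conj j < lam.conj (j - 1)), gr j) ≠ 0 := by
    apply Finset.prod_ne_zero_iff.2
    intro j hj
    exact hgrne j (Finset.mem_of_mem_filter j hj)
  have hPS2ne : (∏ i ∈ (Finset.Icc 1 (r - 1)).filter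
      (fun i => i = 1 ∨ lam.row i < lam.row (i - 1)), gc i) ≠ 0 := by
    apply Finset.prod_ne_zero_iff.2
    intro i hi
    exact hgcne i (Finset.mem_of_mem_filter i hi)
  -- rewrite the finprods
  have hfin1 : (∏ᶠ x ∈ mu.cells, ((mu.hook x : ℤ) : ℚ)) =
      ∏ x ∈ hfinmu.toFinset, ((mu.hook x : ℤ) : ℚ) :=
    finprod_mem_eq_finite_toFinset_prod _ hfinmu
  have hfin2 : (∏ᶠ x ∈ lam.cells, ((lam.hook x : ℤ) : ℚ)) =
      ∏ x ∈ hfinlam.toFinset, ((lam.hook x : ℤ) : ℚ) :=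
    finprod_mem_eq_finite_toFinset_prod _ hfinlam
  have hfin3 : (∏ᶠ b ∈ mu.removable, (((Ptn.res b : ℤ) : ℚ) - ((Ptn.res (r, c) : ℤ) : ℚ))) =
      ∏ b ∈ hfinR.toFinset, (((Ptn.res b : ℤ) : ℚ) - ((Ptn.res (r, c) : ℤ) : ℚ)) :=
    finprod_mem_eq_finite_toFinset_prod _ hfinR
  have hfin3' : (∏ᶠ b ∈ mu.removable, (((Ptn.res (r, c) : ℤ) : ℚ) - ((Ptn.res b : ℤ) : ℚ))) =
      ∏ b ∈ hfinR.toFinset, (((Ptn.res (r, c) : ℤ) : ℚ) - ((Ptn.res b : ℤ) : ℚ)) :=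
    finprod_mem_eq_finite_toFinset_prod _ hfinR
  have hfin4 : (∏ᶠ g ∈ (mu.addable \ {(r, c)}),
      ((((Ptn.res g : ℤ) : ℚ) - ((Ptn.res (r, c) : ℤ) : ℚ))⁻¹)) =
      ∏ g ∈ hfinA.toFinset, ((((Ptn.res g : ℤ) : ℚ) - ((Ptn.res (r, c) : ℤ) : ℚ))⁻¹) :=
    finprod_mem_eq_finite_toFinset_prod _ hfinA
  have hfin4' : (∏ᶠ g ∈ (mu.addable \ {(r, c)}),
      ((((Ptn.res (r, c) : ℤ) : ℚ) - ((Ptn.res g : ℤ) : ℚ))⁻¹)) =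
      ∏ g ∈ hfinA.toFinset, ((((Ptn.res (r, c) : ℤ) : ℚ) - ((Ptn.res g : ℤ) : ℚ))⁻¹) :=
    finprod_mem_eq_finite_toFinset_prod _ hfinA
  -- abbreviations
  set A1 := ∏ j ∈ Finset.Icc 1 (c - 1), fr j with hA1
  set A2 := ∏ i ∈ Finset.Icc 1 (r - 1), fc i with hA2d
  set B1 := ∏ j ∈ Finset.Icc 1 (c - 1), gr j with hB1
  set B2 := ∏ i ∈ Finset.Icc 1 (r - 1), gc i with hB2
  set PD := ∏ x ∈ (hfinmu.toFinset.filter (fun x => ¬ x.1 = r)).filter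
      (fun x => ¬ x.2 = c), ((lam.hook x : ℤ) : ℚ) with hPD
  set PE1 := ∏ j ∈ (Finset.Icc 1 (c - 1)).filter
      (fun j => j = c - 1 ∨ lam.conj (j + 1) < lam.conj j), fr j with hPE1
  set PE2 := ∏ i ∈ (Finset.Icc 1 (r - 1)).filter
      (fun i => i = r - 1 ∨ lam.row (i + 1) < lam.row i), fc i with hPE2
  set PS1 := ∏ j ∈ (Finset.Icc 1 (c - 1)).filter
      (fun j => j = 1 ∨ lam.conj j < lam.conj (j - 1)), gr j with hPS1
  set PS2 := ∏ i ∈ (Finset.Icc 1 (r - 1)).filter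
      (fun i => i = 1 ∨ lam.row i < lam.row (i - 1)), gc i with hPS2
  set e1 := (((Finset.Icc 1 (c - 1)).filter
      (fun j => j = c - 1 ∨ lam.conj (j + 1) < lam.conj j)).card) with he1
  set s1 := (((Finset.Icc 1 (c - 1)).filter
      (fun j => j = 1 ∨ lam.conj j < lam.conj (j - 1))).card) with hs1
  set e2 := (((Finset.Icc 1 (r - 1)).filter
      (fun i => i = r - 1 ∨ lam.row (i + 1) < lam.row i)).card) with he2
  set s2 := (((Finset.Icc 1 (r - 1)).filter
      (fun i => i = 1 ∨ lam.row i < lam.row (i - 1))).card) with hs2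
  constructor
  · rw [hfin1, hfin2, hfin3, hfin4, hprodmu, hprodlam, hRprod1, hAprod1, ← hcardR]
    rw [← div_eq_mul_inv, div_eq_div_iff (mul_ne_zero (mul_ne_zero hB1ne hB2ne) hPDne)
      (mul_ne_zero (mul_ne_zero (pow_ne_zero _ (by norm_num)) hPS1ne) hPS2ne)]
    linear_combination (-(-1 : ℚ) ^ e1 * PD * PS2 * A2) * hcanR +
      (-(-1 : ℚ) ^ e1 * PD * PE1 * B1) * hcanC
  · rw [hfin1, hfin2, hfin3', hfin4', hprodmu, hprodlam, hRprod2, hAprod2, ← hcardC]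
    rw [← div_eq_mul_inv, div_eq_div_iff (mul_ne_zero (mul_ne_zero hB1ne hB2ne) hPDne)
      (mul_ne_zero (mul_ne_zero (pow_ne_zero _ (by norm_num)) hPS1ne) hPS2ne)]
    linear_combination (-(-1 : ℚ) ^ e2 * PD * PS2 * A2) * hcanR +
      (-(-1 : ℚ) ^ e2 * PD * PE1 * B1) * hcanC
end
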